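/- Let (H, m, Φ) be a weak twisted post-Hopf algebra over a field k such that Φ(1) = 1. Then Φ is idempotent: Φ ∘ Φ = Φ. -/

import Mathlib

open TensorProduct

noncomputable def mbar (k : Type*) {H : Type*} [Field k] [Ring H] [HopfAlgebra k H]
    (Φ : H →ₗ[k] H) (m : H ⊗[k] H →ₗ[k] H) : H ⊗[k] H →ₗ[k] H :=
  (LinearMap.mul' k H) ∘ₗ (TensorProduct.map Φ m) ∘ₗ
    (TensorProduct.assoc k H H H).toLinearMap ∘ₗ
    (TensorProduct.map Coalgebra.comul LinearMap.id)

theorem stmt11 (k H : Type*) [Field k] [Ring H] [HopfAlgebra k H]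
    (m : H ⊗[k] H →ₗ[k] H) (Φ : H →ₗ[k] H)
    (hm_comul : Coalgebra.comul ∘ₗ m
      = (TensorProduct.map m m) ∘ₗ (TensorProduct.tensorTensorTensorComm k H H H H).toLinearMap
          ∘ₗ (TensorProduct.map Coalgebra.comul Coalgebra.comul))
    (hm_counit : Coalgebra.counit ∘ₗ m
      = (TensorProduct.lid k k).toLinearMap ∘ₗ
          TensorProduct.map Coalgebra.counit Coalgebra.counit)
    (hΦ_comul : Coalgebra.comul ∘ₗ Φ = TensorProduct.map Φ Φ ∘ₗ Coalgebra.comul)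
    (hΦ_counit : Coalgebra.counit ∘ₗ Φ = Coalgebra.counit)
    (h3 : Φ ∘ₗ mbar k Φ m = mbar k Φ m ∘ₗ TensorProduct.map LinearMap.id Φ)
    (h4 : m ∘ₗ TensorProduct.map LinearMap.id m
      = m ∘ₗ TensorProduct.map (mbar k Φ m) LinearMap.id ∘ₗ
          (TensorProduct.assoc k H H H).symm.toLinearMap)
    (h5 : m ∘ₗ TensorProduct.map LinearMap.id (LinearMap.mul' k H)
      = (LinearMap.mul' k H) ∘ₗ TensorProduct.map m m ∘ₗ
          (TensorProduct.tensorTensorTensorComm k H H H H).toLinearMap ∘ₗ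
          TensorProduct.map Coalgebra.comul LinearMap.id)
    (hΦ1 : Φ 1 = 1) :
    Φ ∘ₗ Φ = Φ := by
  classical
  -- Notation: write T a := m (a ⊗ₜ 1).
  -- Step A: T a = ∑ T a₍₁₎ * T a₍₂₎  (from (v) with b = c = 1)
  have hTT : ∀ (a : H) (r : Coalgebra.Repr k a (H × H)),
      m (a ⊗ₜ[k] (1 : H)) =
        ∑ i ∈ r.index, m (r.left i ⊗ₜ[k] (1 : H)) * m (r.right i ⊗ₜ[k] (1 : H)) := by
    intro a r
    have h := LinearMap.congr_fun h5 (a ⊗ₜ[k] ((1 : H) ⊗ₜ[k] (1 : H)))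
    simp only [LinearMap.comp_apply, TensorProduct.map_tmul, LinearMap.id_apply,
      LinearMap.mul'_apply, mul_one, LinearEquiv.coe_coe] at h
    rw [h, ← r.eq]
    simp [TensorProduct.sum_tmul, TensorProduct.tensorTensorTensorComm_tmul,
      LinearMap.mul'_apply]
  -- Step B: comul (T a) = ∑ T a₍₁₎ ⊗ T a₍₂₎  (m is a coalgebra morphism)
  have hcomulT : ∀ (a : H) (r : Coalgebra.Repr k a (H × H)),
      Coalgebra.comul (R := k) (m (a ⊗ₜ[k] (1 : H))) =
        ∑ i ∈ r.index, m (r.left i ⊗ₜ[k] (1 : H)) ⊗ₜ[k] m (r.right i ⊗ₜ[k] (1 : H)) := by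
    intro a r
    have h := LinearMap.congr_fun hm_comul (a ⊗ₜ[k] (1 : H))
    simp only [LinearMap.comp_apply, TensorProduct.map_tmul, LinearMap.id_apply,
      LinearEquiv.coe_coe, Bialgebra.comul_one] at h
    rw [h, ← r.eq]
    simp [TensorProduct.sum_tmul, Algebra.TensorProduct.one_def,
      TensorProduct.tensorTensorTensorComm_tmul]
  -- Step C: counit (T a) = counit a
  have hcounitT : ∀ a : H,
      Coalgebra.counit (R := k) (m (a ⊗ₜ[k] (1 : H))) = Coalgebra.counit (R := k) a := by
    intro a
    have h := LinearMap.congr_fun hm_counit (a ⊗ₜ[k] (1 : H))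
    simpa using h
  -- Step D: ∑ S(T a₍₁₎) * T a₍₂₎ = counit a • 1  (antipode axiom for the coalgebra map T)
  have hST : ∀ (a : H) (r : Coalgebra.Repr k a (H × H)),
      ∑ i ∈ r.index,
          HopfAlgebra.antipode (R := k) (m (r.left i ⊗ₜ[k] (1 : H))) *
            m (r.right i ⊗ₜ[k] (1 : H)) =
        Coalgebra.counit (R := k) a • (1 : H) := by
    intro a r
    have h := HopfAlgebra.sum_antipode_mul_eq_smul
      (R := k) (A := H)
      { index := r.index
        left := fun i => m (r.left i ⊗ₜ[k] (1 : H))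
        right := fun i => m (r.right i ⊗ₜ[k] (1 : H))
        eq := (hcomulT a r).symm }
    simpa [hcounitT a] using h
  -- Step E (key): T a = counit a • 1,  i.e.  T = η ∘ ε
  have key : ∀ a : H, m (a ⊗ₜ[k] (1 : H)) = Coalgebra.counit (R := k) a • (1 : H) := by
    intro a
    set r := Coalgebra.Repr.arbitrary k a with hr
    set a₁ : (i : r.ι) → Coalgebra.Repr k (r.left i) (H × H) :=
      fun i => Coalgebra.Repr.arbitrary k (r.left i) with ha₁
    set a₂ : (i : r.ι) → Coalgebra.Repr k (r.right i) (H × H) :=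
      fun i => Coalgebra.Repr.arbitrary k (r.right i) with ha₂
    -- the counit law: ∑ counit a₍₁₎ • a₍₂₎ = a
    have hca : ∑ i ∈ r.index, Coalgebra.counit (R := k) (r.left i) • r.right i = a := by
      have h := congrArg (TensorProduct.lid k H) (Coalgebra.sum_counit_tmul_eq r)
      simp only [map_sum, TensorProduct.lid_tmul, one_smul] at h
      exact h
    -- coassociativity with chosen representations
    have hcoassoc := Coalgebra.sum_tmul_tmul_eq r a₁ a₂
    -- apply the trilinear map (u, v, w) ↦ S(T u) * (T v * T w) to both sides
    set T : H →ₗ[k] H := m ∘ₗ ((TensorProduct.mk k H H).flip 1) with hT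
    have hTa : ∀ x : H, T x = m (x ⊗ₜ[k] (1 : H)) := fun x => rfl
    set F : H ⊗[k] (H ⊗[k] H) →ₗ[k] H :=
      (LinearMap.mul' k H) ∘ₗ
        TensorProduct.map ((HopfAlgebra.antipode (R := k)) ∘ₗ T)
          ((LinearMap.mul' k H) ∘ₗ TensorProduct.map T T) with hF
    have hFtmul : ∀ u v w : H,
        F (u ⊗ₜ[k] (v ⊗ₜ[k] w)) =
          HopfAlgebra.antipode (R := k) (m (u ⊗ₜ[k] (1 : H))) *
            (m (v ⊗ₜ[k] (1 : H)) * m (w ⊗ₜ[k] (1 : H))) := by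
      intro u v w
      simp [hF, hTa, LinearMap.mul'_apply]
    have hFeq := congrArg F hcoassoc
    simp only [map_sum, hFtmul] at hFeq
    -- evaluate the left side of hFeq
    have hL : ∑ i ∈ r.index, ∑ j ∈ (a₁ i).index,
        HopfAlgebra.antipode (R := k) (m ((a₁ i).left j ⊗ₜ[k] (1 : H))) *
          (m ((a₁ i).right j ⊗ₜ[k] (1 : H)) * m (r.right i ⊗ₜ[k] (1 : H))) =
        m (a ⊗ₜ[k] (1 : H)) := by
      have hinner : ∀ i ∈ r.index, ∑ j ∈ (a₁ i).index,
          HopfAlgebra.antipode (R := k) (m ((a₁ i).left j ⊗ₜ[k] (1 : H))) *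
            (m ((a₁ i).right j ⊗ₜ[k] (1 : H)) * m (r.right i ⊗ₜ[k] (1 : H))) =
          Coalgebra.counit (R := k) (r.left i) • m (r.right i ⊗ₜ[k] (1 : H)) := by
        intro i _
        calc ∑ j ∈ (a₁ i).index,
            HopfAlgebra.antipode (R := k) (m ((a₁ i).left j ⊗ₜ[k] (1 : H))) *
              (m ((a₁ i).right j ⊗ₜ[k] (1 : H)) * m (r.right i ⊗ₜ[k] (1 : H)))
            = (∑ j ∈ (a₁ i).index,
                HopfAlgebra.antipode (R := k) (m ((a₁ i).left j ⊗ₜ[k] (1 : H))) *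
                  m ((a₁ i).right j ⊗ₜ[k] (1 : H))) * m (r.right i ⊗ₜ[k] (1 : H)) := by
              rw [Finset.sum_mul]
              exact Finset.sum_congr rfl fun j _ => (mul_assoc _ _ _).symm
          _ = (Coalgebra.counit (R := k) (r.left i) • (1 : H)) *
                m (r.right i ⊗ₜ[k] (1 : H)) := by rw [hST (r.left i) (a₁ i)]
          _ = Coalgebra.counit (R := k) (r.left i) • m (r.right i ⊗ₜ[k] (1 : H)) := by
              rw [smul_mul_assoc, one_mul]
      rw [Finset.sum_congr rfl hinner]
      calc ∑ i ∈ r.index,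
          Coalgebra.counit (R := k) (r.left i) • m (r.right i ⊗ₜ[k] (1 : H))
          = m ((∑ i ∈ r.index,
              Coalgebra.counit (R := k) (r.left i) • r.right i) ⊗ₜ[k] (1 : H)) := by
            rw [TensorProduct.sum_tmul, map_sum]
            exact Finset.sum_congr rfl fun i _ => by
              rw [← TensorProduct.smul_tmul', map_smul]
        _ = m (a ⊗ₜ[k] (1 : H)) := by rw [hca]
    -- evaluate the right side of hFeq
    have hR : ∑ i ∈ r.index, ∑ j ∈ (a₂ i).index,
        HopfAlgebra.antipode (R := k) (m (r.left i ⊗ₜ[k] (1 : H))) *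
          (m ((a₂ i).left j ⊗ₜ[k] (1 : H)) * m ((a₂ i).right j ⊗ₜ[k] (1 : H))) =
        Coalgebra.counit (R := k) a • (1 : H) := by
      have hinner : ∀ i ∈ r.index, ∑ j ∈ (a₂ i).index,
          HopfAlgebra.antipode (R := k) (m (r.left i ⊗ₜ[k] (1 : H))) *
            (m ((a₂ i).left j ⊗ₜ[k] (1 : H)) * m ((a₂ i).right j ⊗ₜ[k] (1 : H))) =
          HopfAlgebra.antipode (R := k) (m (r.left i ⊗ₜ[k] (1 : H))) *
            m (r.right i ⊗ₜ[k] (1 : H)) := by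
        intro i _
        rw [← Finset.mul_sum, ← hTT (r.right i) (a₂ i)]
      rw [Finset.sum_congr rfl hinner, hST a r]
    rw [hL, hR] at hFeq
    exact hFeq
  -- Step F: mbar (a ⊗ 1) = Φ a
  have hΨ : ∀ a : H, mbar k Φ m (a ⊗ₜ[k] (1 : H)) = Φ a := by
    intro a
    set r := Coalgebra.Repr.arbitrary k a with hr
    have hac : ∑ i ∈ r.index, Coalgebra.counit (R := k) (r.right i) • r.left i = a := by
      have h := congrArg (TensorProduct.rid k H) (Coalgebra.sum_tmul_counit_eq r)
      simp only [map_sum, TensorProduct.rid_tmul, one_smul] at h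
      exact h
    unfold mbar
    simp only [LinearMap.comp_apply, TensorProduct.map_tmul, LinearMap.id_apply,
      LinearEquiv.coe_coe]
    rw [← r.eq]
    rw [TensorProduct.sum_tmul, map_sum, map_sum, map_sum]
    calc ∑ i ∈ r.index, LinearMap.mul' k H
          (TensorProduct.map Φ m ((TensorProduct.assoc k H H H)
            ((r.left i ⊗ₜ[k] r.right i) ⊗ₜ[k] (1 : H))))
        = ∑ i ∈ r.index, Φ (r.left i) * m (r.right i ⊗ₜ[k] (1 : H)) := by
          exact Finset.sum_congr rfl fun i _ => by
            simp [TensorProduct.assoc_tmul, LinearMap.mul'_apply]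
      _ = ∑ i ∈ r.index, Coalgebra.counit (R := k) (r.right i) • Φ (r.left i) := by
          exact Finset.sum_congr rfl fun i _ => by
            rw [key, mul_smul_comm, mul_one]
      _ = Φ a := by
          have h := congrArg Φ hac
          rw [map_sum] at h
          simp only [map_smul] at h
          exact h
  -- Step G: conclude using (iii) at a ⊗ 1 and Φ 1 = 1
  ext a
  have h := LinearMap.congr_fun h3 (a ⊗ₜ[k] (1 : H))
  simp only [LinearMap.comp_apply, TensorProduct.map_tmul, LinearMap.id_apply, hΦ1] at h
  rw [hΨ a] at h
  simpa using h
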